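/- arXiv:2207.12897 — 2 statements merged into one kernel-verified Lean document; each statement's English description precedes it below -/
import Mathlib

section
/- Let μ₁ and μ₂ be probability measures on a measurable space S with d_TV(μ₁, μ₂) < 1. For each n ∈ ℕ, let κ_n be a Markov kernel from S to a measurable space Ω_n, and set P_n = μ₁ ∘ κ_n and Q_n = μ₂ ∘ κ_n (where μ ∘ κ denotes A ↦ ∫ κ(x)(A) dμ(x)). Then for any distinct real numbers ρ₁ ≠ ρ₂, there is no sequence of measurable functions ρ̂_n : Ω_n → ℝ such that ρ̂_n converges in probability to ρ₁ under P_n and to ρ₂ under Q_n. -/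
open MeasureTheory ProbabilityTheory Filter

noncomputable def tvDist {S : Type*} [MeasurableSpace S] (μ₁ μ₂ : Measure S) : ℝ :=
  ⨆ A : {A : Set S // MeasurableSet A}, |(μ₁ A.1).toReal - (μ₂ A.1).toReal|

lemma lint_le_lint_add_tvDist {S : Type*} [MeasurableSpace S]
    (μ₁ μ₂ : Measure S) [IsProbabilityMeasure μ₁] [IsProbabilityMeasure μ₂]
    (f : S → ENNReal) (_hf : Measurable f) (hf1 : ∀ x, f x ≤ 1) :
    (∫⁻ x, f x ∂μ₁).toReal ≤ (∫⁻ x, f x ∂μ₂).toReal + tvDist μ₁ μ₂ := by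
  obtain ⟨s, hs, h₁, h₂⟩ := hahn_decomposition (μ := μ₁) (ν := μ₂)
  -- restrict inequalities
  have hres : μ₂.restrict s ≤ μ₁.restrict s := by
    refine Measure.le_iff.2 fun t ht => ?_
    rw [Measure.restrict_apply ht, Measure.restrict_apply ht]
    exact h₁ _ (ht.inter hs) Set.inter_subset_right
  have hresc : μ₁.restrict sᶜ ≤ μ₂.restrict sᶜ := by
    refine Measure.le_iff.2 fun t ht => ?_
    rw [Measure.restrict_apply ht, Measure.restrict_apply ht]
    exact h₂ _ (ht.inter hs.compl) Set.inter_subset_right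
  set ν := μ₁.restrict s - μ₂.restrict s with hν
  have hadd : μ₂.restrict s + ν = μ₁.restrict s := by
    rw [hν, add_comm, Measure.sub_add_cancel_of_le hres]
  have hνuniv : ν Set.univ ≤ μ₁ s - μ₂ s := by
    rw [hν, Measure.sub_apply MeasurableSet.univ hres]
    simp [Measure.restrict_apply_univ]
  have key : ∫⁻ x, f x ∂μ₁ ≤ ∫⁻ x, f x ∂μ₂ + (μ₁ s - μ₂ s) := by
    rw [← lintegral_add_compl f hs (μ := μ₁), ← lintegral_add_compl f hs (μ := μ₂)]
    have e1 : ∫⁻ x in s, f x ∂μ₁ ≤ ∫⁻ x in s, f x ∂μ₂ + (μ₁ s - μ₂ s) := by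
      calc ∫⁻ x in s, f x ∂μ₁ = ∫⁻ x, f x ∂(μ₂.restrict s + ν) := by rw [hadd]
        _ = ∫⁻ x in s, f x ∂μ₂ + ∫⁻ x, f x ∂ν := by rw [lintegral_add_measure]
        _ ≤ ∫⁻ x in s, f x ∂μ₂ + (μ₁ s - μ₂ s) := by
            gcongr
            calc ∫⁻ x, f x ∂ν ≤ ∫⁻ _, 1 ∂ν := lintegral_mono hf1
              _ = ν Set.univ := by simp
              _ ≤ _ := hνuniv
    have e2 : ∫⁻ x in sᶜ, f x ∂μ₁ ≤ ∫⁻ x in sᶜ, f x ∂μ₂ := lintegral_mono' hresc le_rfl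
    calc ∫⁻ x in s, f x ∂μ₁ + ∫⁻ x in sᶜ, f x ∂μ₁
        ≤ (∫⁻ x in s, f x ∂μ₂ + (μ₁ s - μ₂ s)) + ∫⁻ x in sᶜ, f x ∂μ₂ := add_le_add e1 e2
      _ = (∫⁻ x in s, f x ∂μ₂ + ∫⁻ x in sᶜ, f x ∂μ₂) + (μ₁ s - μ₂ s) := by ring
  have hfin : ∀ (μ : Measure S) [IsProbabilityMeasure μ], ∫⁻ x, f x ∂μ ≠ ⊤ := by
    intro μ _
    have : ∫⁻ x, f x ∂μ ≤ 1 := by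
      calc ∫⁻ x, f x ∂μ ≤ ∫⁻ _, 1 ∂μ := lintegral_mono hf1
        _ = 1 := by simp
    exact ne_top_of_le_ne_top ENNReal.one_ne_top this
  have hsub_ne : μ₁ s - μ₂ s ≠ ⊤ := ne_top_of_le_ne_top (measure_ne_top μ₁ s) tsub_le_self
  have hle21 : μ₂ s ≤ μ₁ s := h₁ s hs subset_rfl
  have htv : (μ₁ s - μ₂ s).toReal ≤ tvDist μ₁ μ₂ := by
    have : (μ₁ s - μ₂ s).toReal = |(μ₁ s).toReal - (μ₂ s).toReal| := by
      rw [ENNReal.toReal_sub_of_le hle21 (measure_ne_top μ₁ s), abs_of_nonneg]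
      simp [sub_nonneg, ENNReal.toReal_le_toReal (measure_ne_top μ₂ s) (measure_ne_top μ₁ s), hle21]
    rw [this]
    refine le_ciSup_of_le ?_ ⟨s, hs⟩ le_rfl
    refine ⟨2, Set.forall_mem_range.2 fun A => ?_⟩
    have h1 : (μ₁ A.1).toReal ≤ 1 := by
      simpa using ENNReal.toReal_mono ENNReal.one_ne_top (prob_le_one (μ := μ₁) (s := A.1))
    have h2 : (μ₂ A.1).toReal ≤ 1 := by
      simpa using ENNReal.toReal_mono ENNReal.one_ne_top (prob_le_one (μ := μ₂) (s := A.1))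
    have := abs_sub_abs_le_abs_sub ((μ₁ A.1).toReal) ((μ₂ A.1).toReal)
    calc |(μ₁ A.1).toReal - (μ₂ A.1).toReal| ≤ |(μ₁ A.1).toReal| + |(μ₂ A.1).toReal| :=
          abs_sub _ _
      _ ≤ 1 + 1 := by
          rw [abs_of_nonneg ENNReal.toReal_nonneg, abs_of_nonneg ENNReal.toReal_nonneg]
          exact add_le_add h1 h2
      _ = 2 := by norm_num
  calc (∫⁻ x, f x ∂μ₁).toReal ≤ (∫⁻ x, f x ∂μ₂ + (μ₁ s - μ₂ s)).toReal := by
        exact ENNReal.toReal_mono (by rw [ENNReal.add_ne_top]; exact ⟨hfin μ₂, hsub_ne⟩) key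
    _ = (∫⁻ x, f x ∂μ₂).toReal + (μ₁ s - μ₂ s).toReal := ENNReal.toReal_add (hfin μ₂) hsub_ne
    _ ≤ (∫⁻ x, f x ∂μ₂).toReal + tvDist μ₁ μ₂ := by linarith

lemma tvDist_comm {S : Type*} [MeasurableSpace S] (μ₁ μ₂ : Measure S) :
    tvDist μ₂ μ₁ = tvDist μ₁ μ₂ := by
  unfold tvDist
  congr 1; funext A; rw [abs_sub_comm]

/-- If `μ₁` and `μ₂` are probability measures with `d_TV(μ₁, μ₂) < 1`, and for each `n` the
measures `P n` and `Q n` are obtained by passing `μ₁` and `μ₂` through a common Markov kernel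
`κ n`, then no sequence of measurable estimators can converge in probability to `ρ₁` under `P n`
and to a different value `ρ₂` under `Q n`. -/
theorem no_consistent_estimator_through_kernels {S : Type*} [MeasurableSpace S]
    {Ω : ℕ → Type*} [∀ n, MeasurableSpace (Ω n)]
    (μ₁ μ₂ : Measure S) [IsProbabilityMeasure μ₁] [IsProbabilityMeasure μ₂]
    (hTV : tvDist μ₁ μ₂ < 1)
    (κ : ∀ n, Kernel S (Ω n)) [∀ n, IsMarkovKernel (κ n)]
    (P Q : ∀ n, Measure (Ω n))
    (hP : ∀ n, P n = μ₁.bind (fun x => κ n x))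
    (hQ : ∀ n, Q n = μ₂.bind (fun x => κ n x))
    (ρ₁ ρ₂ : ℝ) (hρ : ρ₁ ≠ ρ₂) :
    ¬ ∃ ρhat : ∀ n, Ω n → ℝ, (∀ n, Measurable (ρhat n)) ∧
      (∀ ε > 0, Tendsto (fun n => ((P n) {ω | ε < |ρhat n ω - ρ₁|}).toReal) atTop (nhds 0)) ∧
      (∀ ε > 0, Tendsto (fun n => ((Q n) {ω | ε < |ρhat n ω - ρ₂|}).toReal) atTop (nhds 0)) := by
  rintro ⟨ρhat, hmeas, hP1, hQ2⟩
  set ε : ℝ := |ρ₁ - ρ₂| / 3 with hεdef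
  have hε : 0 < ε := by
    have : ρ₁ - ρ₂ ≠ 0 := sub_ne_zero.2 hρ
    have := abs_pos.2 this
    positivity
  set A : ∀ n, Set (Ω n) := fun n => {ω | ε < |ρhat n ω - ρ₁|} with hAdef
  have hA : ∀ n, MeasurableSet (A n) := fun n =>
    measurableSet_lt measurable_const ((hmeas n).sub measurable_const).abs
  have hincl : ∀ n, (A n)ᶜ ⊆ {ω | ε < |ρhat n ω - ρ₂|} := by
    intro n ω hω
    simp only [hAdef, Set.mem_compl_iff, Set.mem_setOf_eq, not_lt] at hω
    have h3 : |ρ₁ - ρ₂| ≤ |ρ₁ - ρhat n ω| + |ρhat n ω - ρ₂| := abs_sub_le _ _ _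
    rw [abs_sub_comm ρ₁ (ρhat n ω)] at h3
    have : |ρ₁ - ρ₂| = 3 * ε := by rw [hεdef]; ring
    simp only [Set.mem_setOf_eq]
    linarith
  have hQprob : ∀ n, IsProbabilityMeasure (Q n) := by
    intro n
    constructor
    rw [hQ n, Measure.bind_apply MeasurableSet.univ (κ n).measurable.aemeasurable]
    simp
  -- Q n (A n) tends to 1
  have hQc : Tendsto (fun n => ((Q n) (A n)ᶜ).toReal) atTop (nhds 0) := by
    refine squeeze_zero (fun n => ENNReal.toReal_nonneg) (fun n => ?_) (hQ2 ε hε)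
    exact ENNReal.toReal_mono (measure_ne_top _ _) (measure_mono (hincl n))
  have hQA : Tendsto (fun n => ((Q n) (A n)).toReal) atTop (nhds 1) := by
    have heq : ∀ n, ((Q n) (A n)).toReal = 1 - ((Q n) (A n)ᶜ).toReal := by
      intro n
      haveI := hQprob n
      have := prob_compl_eq_one_sub (μ := Q n) (hA n)
      rw [this, ENNReal.toReal_sub_of_le prob_le_one ENNReal.one_ne_top]
      simp
    simp only [heq]
    simpa using (tendsto_const_nhds (x := (1:ℝ))).sub hQc
  -- key inequality
  have hkey : ∀ n, ((Q n) (A n)).toReal ≤ ((P n) (A n)).toReal + tvDist μ₁ μ₂ := by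
    intro n
    rw [hP n, hQ n, Measure.bind_apply (hA n) (κ n).measurable.aemeasurable,
      Measure.bind_apply (hA n) (κ n).measurable.aemeasurable, ← tvDist_comm μ₁ μ₂]
    exact lint_le_lint_add_tvDist μ₂ μ₁ (fun x => κ n x (A n))
      ((κ n).measurable_coe (hA n)) (fun x => prob_le_one)
  have hlim : Tendsto (fun n => ((P n) (A n)).toReal + tvDist μ₁ μ₂) atTop
      (nhds (0 + tvDist μ₁ μ₂)) := (hP1 ε hε).add tendsto_const_nhds
  have : (1 : ℝ) ≤ 0 + tvDist μ₁ μ₂ := le_of_tendsto_of_tendsto' hQA hlim hkey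
  linarith
end

section
/- Let I ⊆ ℝ and let φ : I → ℝ be a continuous injective function with continuous inverse φ⁻¹ : φ(I) → I, and let ρ ∈ I. For each k ∈ ℕ, let Y_{1,k}, …, Y_{k,k} be random variables taking values in I, and let t_{i,k} ∈ [0, h*] and t_{ij,k} ∈ [0, 1/k] (for i ≠ j) be constants with h* < ∞. Let u, v : [0, h*] → ℝ be continuous with u > 0, and C ≥ 0 a constant, such that: (i) E[φ(Y_{i,k})] = u(t_{i,k}) φ(ρ) + v(t_{i,k}) for all i, k; (ii) Var(φ(Y_{i,k})) ≤ C t_{i,k} for all i, k; (iii) Cov(φ(Y_{i,k}), φ(Y_{j,k})) ≤ (max_{[0,h*]} u)² · C · t_{ij,k} for all i ≠ j. Then the estimator ρ̂_k = φ⁻¹( (1/k) ∑_{i=1}^k (φ(Y_{i,k}) − v(t_{i,k})) / u(t_{i,k}) ) converges in probability to ρ as k → ∞. -/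
open MeasureTheory ProbabilityTheory Filter

/-- The covariance of two real random variables. -/
noncomputable def cov {Ω : Type*} [MeasurableSpace Ω] (X Y : Ω → ℝ) (P : Measure Ω) : ℝ :=
  ∫ ω, (X ω - ∫ ω', X ω' ∂P) * (Y ω - ∫ ω', Y ω' ∂P) ∂P

section Aux
set_option linter.unusedSectionVars false
variable {Ω : Type*} [MeasurableSpace Ω] {P : Measure Ω} [IsProbabilityMeasure P]

lemma integrable_mul_of_mem2 {f g : Ω → ℝ} (hf : MemLp f 2 P) (hg : MemLp g 2 P) :
    Integrable (fun ω => f ω * g ω) P := by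
  have h : MemLp (f • g) 1 P :=
    hg.smul hf
  exact memLp_one_iff_integrable.mp h

lemma cov_self_eq_variance {X : Ω → ℝ} (hX : MemLp X 2 P) :
    cov X X P = variance X P := by
  rw [variance_eq_integral hX.aemeasurable, cov]
  congr 1
  funext ω
  simp [pow_two]

lemma cov_sub_const {f g : Ω → ℝ} (hf : Integrable f P) (hg : Integrable g P) (c d : ℝ) :
    cov (fun ω => f ω - c) (fun ω => g ω - d) P = cov f g P := by
  have h1 : ∫ ω, (f ω - c) ∂P = (∫ ω, f ω ∂P) - c := by
    rw [integral_sub hf (integrable_const c), integral_const]; simp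
  have h2 : ∫ ω, (g ω - d) ∂P = (∫ ω, g ω ∂P) - d := by
    rw [integral_sub hg (integrable_const d), integral_const]; simp
  rw [cov, cov, h1, h2]
  congr 1; funext ω; ring

lemma memℒp_weighted_sum {n : ℕ} (X : Fin n → Ω → ℝ) (hX : ∀ i, MemLp (X i) 2 P)
    (a : Fin n → ℝ) : MemLp (fun ω => ∑ i, a i * X i ω) 2 P := by
  have h : ∀ i ∈ Finset.univ, MemLp (fun ω => a i * X i ω) 2 P :=
    fun i _ => (hX i).const_mul _
  have h2 := memLp_finset_sum' Finset.univ h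
  have h3 : (∑ i : Fin n, fun ω => a i * X i ω) = fun ω => ∑ i : Fin n, a i * X i ω := by
    funext ω; simp
  rwa [h3] at h2

lemma variance_weighted_sum {n : ℕ} (X : Fin n → Ω → ℝ) (hX : ∀ i, MemLp (X i) 2 P)
    (a : Fin n → ℝ) :
    variance (fun ω => ∑ i, a i * X i ω) P
      = ∑ i, ∑ j, a i * a j * cov (X i) (X j) P := by
  set μ : Fin n → ℝ := fun i => ∫ ω, X i ω ∂P with hμ
  have hXint : ∀ i, Integrable (X i) P := fun i => (hX i).integrable one_le_two
  have hS : MemLp (fun ω => ∑ i, a i * X i ω) 2 P := memℒp_weighted_sum X hX a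
  have hES : (∫ ω, (∑ i, a i * X i ω) ∂P) = ∑ i, a i * μ i := by
    rw [integral_finset_sum _ (fun i _ => (hXint i).const_mul _)]
    exact Finset.sum_congr rfl fun i _ => integral_const_mul _ _
  have hint : ∀ (i j : Fin n), Integrable (fun ω => (X i ω - μ i) * (X j ω - μ j)) P :=
    fun i j => integrable_mul_of_mem2 ((hX i).sub (memLp_const (μ i)))
      ((hX j).sub (memLp_const (μ j)))
  rw [variance_eq_integral hS.aemeasurable, hES]
  change ∫ ω, (((fun ω => ∑ i, a i * X i ω) - fun _ => ∑ i, a i * μ i : Ω → ℝ) ^ (2 : ℕ)) ω ∂P = _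
  have hpt : (((fun ω => ∑ i, a i * X i ω) - fun _ => ∑ i, a i * μ i : Ω → ℝ) ^ (2 : ℕ))
      = fun ω => ∑ i, ∑ j, a i * a j * ((X i ω - μ i) * (X j ω - μ j)) := by
    funext ω
    simp only [Pi.pow_apply, Pi.sub_apply]
    rw [← Finset.sum_sub_distrib, sq, Finset.sum_mul_sum]
    exact Finset.sum_congr rfl fun i _ => Finset.sum_congr rfl fun j _ => by ring
  rw [hpt]
  rw [integral_finset_sum _ (fun i _ => integrable_finset_sum _
    (fun j _ => ((hint i j).const_mul _)))]
  refine Finset.sum_congr rfl fun i _ => ?_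
  rw [integral_finset_sum _ (fun j _ => ((hint i j).const_mul _))]
  exact Finset.sum_congr rfl fun j _ => by rw [integral_const_mul]; rfl

end Aux

/-- Abstract core of the sufficiency proof: let `φ : I → ℝ` be continuous and injective with a
continuous inverse `ψ` (so `ψ (φ x) = x` on `I`), and `ρ ∈ I`. For each `k`, let
`Y k 1, …, Y k k` be `I`-valued random variables, with times `t k i ∈ [0, h*]` and
`τ k i j ∈ [0, 1/k]`, and `u, v` continuous on `[0, h*]` with `u > 0` such that
`E[φ(Y k i)] = u (t k i) * φ ρ + v (t k i)`, `Var(φ(Y k i)) ≤ C * t k i`, and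
`Cov(φ(Y k i), φ(Y k j)) ≤ (max u)² * C * τ k i j` for `i ≠ j`. Then the estimator
`ρ̂ k = ψ ((1/k) ∑ i, (φ(Y k i) - v (t k i)) / u (t k i))` converges in probability to `ρ`. -/
theorem estimator_tendsto_in_probability {Ω : Type*} [MeasurableSpace Ω]
    (P : Measure Ω) [IsProbabilityMeasure P]
    (I : Set ℝ) (φ ψ : ℝ → ℝ)
    (hφc : ContinuousOn φ I) (hφinj : Set.InjOn φ I)
    (hψc : Continuous ψ) (hψmaps : Set.MapsTo ψ (φ '' I) I) (hψφ : ∀ x ∈ I, ψ (φ x) = x)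
    (ρ : ℝ) (hρ : ρ ∈ I)
    (hstar : ℝ)
    (Y : (k : ℕ) → Fin k → Ω → ℝ) (hYmeas : ∀ k i, Measurable (Y k i))
    (hYI : ∀ k i ω, Y k i ω ∈ I)
    (hY2 : ∀ k i, MemLp (fun ω => φ (Y k i ω)) 2 P)
    (t : (k : ℕ) → Fin k → ℝ) (ht : ∀ k i, t k i ∈ Set.Icc 0 hstar)
    (τ : (k : ℕ) → Fin k → Fin k → ℝ)
    (hτ : ∀ k (i j : Fin k), i ≠ j → τ k i j ∈ Set.Icc (0 : ℝ) (1 / k))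
    (u v : ℝ → ℝ)
    (huc : ContinuousOn u (Set.Icc 0 hstar)) (hvc : ContinuousOn v (Set.Icc 0 hstar))
    (hupos : ∀ s ∈ Set.Icc 0 hstar, 0 < u s)
    (C : ℝ) (hC : 0 ≤ C)
    (hmean : ∀ k i, ∫ ω, φ (Y k i ω) ∂P = u (t k i) * φ ρ + v (t k i))
    (hvar : ∀ k i, variance (fun ω => φ (Y k i ω)) P ≤ C * t k i)
    (hcov : ∀ k (i j : Fin k), i ≠ j →
      cov (fun ω => φ (Y k i ω)) (fun ω => φ (Y k j ω)) P
        ≤ (sSup (u '' Set.Icc 0 hstar)) ^ 2 * C * τ k i j) :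
    ∀ ε > 0,
      Tendsto
        (fun k : ℕ =>
          (P {ω | ε <
            |ψ ((1 / (k : ℝ)) * ∑ i, (φ (Y k i ω) - v (t k i)) / u (t k i)) - ρ|}).toReal)
        atTop (nhds 0) := by
  intro ε hε
  -- basic facts about u on [0, h*]
  have h0 : (0:ℝ) ≤ hstar := le_trans (ht 1 0).1 (ht 1 0).2
  have hIcc : (Set.Icc (0:ℝ) hstar).Nonempty := Set.nonempty_Icc.mpr h0
  have hcomp : IsCompact (u '' Set.Icc 0 hstar) := isCompact_Icc.image_of_continuousOn huc
  have hne : (u '' Set.Icc 0 hstar).Nonempty := hIcc.image u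
  set m := sInf (u '' Set.Icc 0 hstar) with hm
  set M := sSup (u '' Set.Icc 0 hstar) with hM
  have hmmem : m ∈ u '' Set.Icc 0 hstar := hcomp.sInf_mem hne
  have hMmem : M ∈ u '' Set.Icc 0 hstar := hcomp.sSup_mem hne
  have hmpos : 0 < m := by
    obtain ⟨s, hs, hsu⟩ := hmmem; exact hsu ▸ hupos s hs
  have hMpos : 0 < M := by
    obtain ⟨s, hs, hsu⟩ := hMmem; exact hsu ▸ hupos s hs
  have hmle : ∀ s ∈ Set.Icc (0:ℝ) hstar, m ≤ u s :=
    fun s hs => csInf_le hcomp.bddBelow ⟨s, hs, rfl⟩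
  -- δ from continuity of ψ at φ ρ
  obtain ⟨δ, hδpos, hδ⟩ := Metric.continuous_iff.mp hψc (φ ρ) ε hε
  set K := (C * hstar + M ^ 2 * C) / m ^ 2 with hK
  have hKnn : 0 ≤ K := by positivity
  -- main quantitative bound for k ≥ 1
  have main : ∀ k : ℕ, 1 ≤ k →
      (P {ω | ε <
        |ψ ((1 / (k : ℝ)) * ∑ i, (φ (Y k i ω) - v (t k i)) / u (t k i)) - ρ|}).toReal
        ≤ K / δ ^ 2 * (1 / (k:ℝ)) := by
    intro k hk
    have hk0 : (0:ℝ) < k := by exact_mod_cast hk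
    have hkne : (k:ℝ) ≠ 0 := ne_of_gt hk0
    have hupos' : ∀ i : Fin k, 0 < u (t k i) := fun i => hupos _ (ht k i)
    set F : Fin k → Ω → ℝ := fun i ω => φ (Y k i ω) - v (t k i) with hFdef
    set a : Fin k → ℝ := fun i => 1 / ((k:ℝ) * u (t k i)) with hadef
    have hF2 : ∀ i, MemLp (F i) 2 P := fun i => (hY2 k i).sub (memLp_const _)
    have hapos : ∀ i, 0 < a i := fun i => by
      have := hupos' i; rw [hadef]; positivity
    have hale : ∀ i, a i ≤ 1 / ((k:ℝ) * m) := by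
      intro i
      rw [hadef]
      apply one_div_le_one_div_of_le (by positivity)
      exact mul_le_mul_of_nonneg_left (hmle _ (ht k i)) hk0.le
    set Z : Ω → ℝ := fun ω =>
      (1 / (k : ℝ)) * ∑ i, (φ (Y k i ω) - v (t k i)) / u (t k i) with hZdef
    have hZeq : Z = fun ω => ∑ i, a i * F i ω := by
      funext ω
      show (1 / (k:ℝ)) * ∑ i, (φ (Y k i ω) - v (t k i)) / u (t k i) = ∑ i, a i * F i ω
      rw [Finset.mul_sum]
      refine Finset.sum_congr rfl fun i _ => ?_
      have hu : u (t k i) ≠ 0 := ne_of_gt (hupos' i)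
      rw [hadef, hFdef]
      field_simp
    have hZ2 : MemLp Z 2 P := by rw [hZeq]; exact memℒp_weighted_sum F hF2 a
    -- mean of Z
    have hmeanF : ∀ i, ∫ ω, F i ω ∂P = u (t k i) * φ ρ := by
      intro i
      have : ∫ ω, (φ (Y k i ω) - v (t k i)) ∂P
          = (∫ ω, φ (Y k i ω) ∂P) - v (t k i) := by
        rw [integral_sub ((hY2 k i).integrable one_le_two) (integrable_const _),
          integral_const]; simp
      rw [show (∫ ω, F i ω ∂P) = ∫ ω, (φ (Y k i ω) - v (t k i)) ∂P from rfl, this,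
        hmean k i]; ring
    have hEZ : ∫ ω, Z ω ∂P = φ ρ := by
      rw [hZeq, integral_finset_sum _
        (fun i _ => (((hF2 i).integrable one_le_two).const_mul _))]
      have hterm : ∀ i : Fin k, ∫ ω, a i * F i ω ∂P = φ ρ / (k:ℝ) := by
        intro i
        rw [integral_const_mul, hmeanF, hadef]
        have hu : u (t k i) ≠ 0 := ne_of_gt (hupos' i)
        field_simp
      rw [Finset.sum_congr rfl fun i _ => hterm i, Finset.sum_const, Finset.card_univ,
        Fintype.card_fin, nsmul_eq_mul]
      field_simp
    -- bound on covariances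
    have hbig : ∀ i j : Fin k, cov (F i) (F j) P
        ≤ if i = j then C * hstar else M ^ 2 * C / (k:ℝ) := by
      intro i j
      have hshift : cov (F i) (F j) P
          = cov (fun ω => φ (Y k i ω)) (fun ω => φ (Y k j ω)) P :=
        cov_sub_const ((hY2 k i).integrable one_le_two)
          ((hY2 k j).integrable one_le_two) _ _
      by_cases hij : i = j
      · subst hij
        simp only [if_pos rfl]
        rw [hshift, cov_self_eq_variance (hY2 k i)]
        exact le_trans (hvar k i) (mul_le_mul_of_nonneg_left (ht k i).2 hC)
      · simp only [if_neg hij]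
        rw [hshift]
        refine le_trans (hcov k i j hij) ?_
        rw [div_eq_mul_one_div]
        exact mul_le_mul_of_nonneg_left (hτ k i j hij).2 (by positivity)
    have hBnn : ∀ i j : Fin k,
        (0:ℝ) ≤ if i = j then C * hstar else M ^ 2 * C / (k:ℝ) := by
      intro i j
      by_cases hij : i = j <;> simp [hij] <;> positivity
    -- variance bound
    have hvarZ : variance Z P ≤ K / (k:ℝ) := by
      rw [hZeq, variance_weighted_sum F hF2 a]
      have hterm : ∀ i j : Fin k, a i * a j * cov (F i) (F j) P
          ≤ (1 / ((k:ℝ) * m)) ^ 2 * (if i = j then C * hstar else M ^ 2 * C / (k:ℝ)) := by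
        intro i j
        calc a i * a j * cov (F i) (F j) P
            ≤ a i * a j * (if i = j then C * hstar else M ^ 2 * C / (k:ℝ)) :=
              mul_le_mul_of_nonneg_left (hbig i j)
                (mul_nonneg (hapos i).le (hapos j).le)
          _ ≤ (1 / ((k:ℝ) * m)) ^ 2 * (if i = j then C * hstar else M ^ 2 * C / (k:ℝ)) := by
              refine mul_le_mul_of_nonneg_right ?_ (hBnn i j)
              rw [sq]
              exact mul_le_mul (hale i) (hale j) (hapos j).le (by positivity)
      have hrow : ∀ i : Fin k,
          ∑ j, (if i = j then C * hstar else M ^ 2 * C / (k:ℝ))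
            ≤ C * hstar + M ^ 2 * C := by
        intro i
        have hsplit : ∀ j : Fin k, (if i = j then C * hstar else M ^ 2 * C / (k:ℝ))
            = M ^ 2 * C / (k:ℝ) + (if i = j then C * hstar - M ^ 2 * C / (k:ℝ) else 0) := by
          intro j; by_cases hij : i = j <;> simp [hij]
        rw [Finset.sum_congr rfl fun j _ => hsplit j, Finset.sum_add_distrib,
          Finset.sum_const, Finset.sum_ite_eq, Finset.card_univ, Fintype.card_fin,
          nsmul_eq_mul, if_pos (Finset.mem_univ i)]
        have h1 : (k:ℝ) * (M ^ 2 * C / (k:ℝ)) = M ^ 2 * C := by field_simp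
        rw [h1]
        have h2 : (0:ℝ) ≤ M ^ 2 * C / (k:ℝ) := by positivity
        linarith
      calc ∑ i, ∑ j, a i * a j * cov (F i) (F j) P
          ≤ ∑ i : Fin k, ∑ j : Fin k,
              (1 / ((k:ℝ) * m)) ^ 2 * (if i = j then C * hstar else M ^ 2 * C / (k:ℝ)) :=
            Finset.sum_le_sum fun i _ => Finset.sum_le_sum fun j _ => hterm i j
        _ ≤ ∑ i : Fin k, (1 / ((k:ℝ) * m)) ^ 2 * (C * hstar + M ^ 2 * C) := by
            refine Finset.sum_le_sum fun i _ => ?_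
            rw [← Finset.mul_sum]
            exact mul_le_mul_of_nonneg_left (hrow i) (by positivity)
        _ = K / (k:ℝ) := by
            rw [Finset.sum_const, Finset.card_univ, Fintype.card_fin, nsmul_eq_mul, hK]
            field_simp
    -- Chebyshev and conclusion
    show (P {ω | ε < |ψ (Z ω) - ρ|}).toReal ≤ K / δ ^ 2 * (1 / (k:ℝ))
    have hsub : {ω | ε < |ψ (Z ω) - ρ|} ⊆ {ω | δ ≤ |Z ω - φ ρ|} := by
      intro ω hω
      by_contra h
      simp only [Set.mem_setOf_eq, not_le] at h
      have h2 := hδ (Z ω) (by rw [Real.dist_eq]; exact h)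
      rw [Real.dist_eq, hψφ ρ hρ] at h2
      exact absurd hω (not_lt.mpr h2.le)
    have cheb := meas_ge_le_variance_div_sq (μ := P) hZ2 hδpos
    rw [hEZ] at cheb
    calc (P {ω | ε < |ψ (Z ω) - ρ|}).toReal
        ≤ (P {ω | δ ≤ |Z ω - φ ρ|}).toReal :=
          ENNReal.toReal_mono (measure_ne_top _ _) (measure_mono hsub)
      _ ≤ variance Z P / δ ^ 2 := by
          refine le_trans (ENNReal.toReal_mono ENNReal.ofReal_ne_top cheb) ?_
          rw [ENNReal.toReal_ofReal (div_nonneg (variance_nonneg _ _) (by positivity))]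
      _ ≤ (K / (k:ℝ)) / δ ^ 2 := by
          exact div_le_div_of_nonneg_right hvarZ (by positivity) |>.trans_eq rfl
      _ = K / δ ^ 2 * (1 / (k:ℝ)) := by ring
  -- squeeze
  have htends : Tendsto (fun k : ℕ => K / δ ^ 2 * (1 / (k:ℝ))) atTop (nhds 0) := by
    have h := tendsto_one_div_atTop_nhds_zero_nat (𝕜 := ℝ)
    have h2 := h.const_mul (K / δ ^ 2)
    simpa using h2
  refine squeeze_zero' (Eventually.of_forall fun k => ENNReal.toReal_nonneg) ?_ htends
  exact eventually_atTop.mpr ⟨1, main⟩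
end
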